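/- Let A be a commutative ring, let (h_n)_{n≥1} be a sequence of elements of A, and let (S_n)_{n≥1} be a sequence of subsets of A with h_n ∈ S_n for all n, satisfying: (1) S_{n+1} ⊆ S_n for all n ≥ 1; (2) each S_n is closed under multiplication; (3) for every g ∈ S_{n+1} and f ∈ A, g + f·h_n ∈ S_{n+1}. Suppose further that there exists a prime ideal p_1 of A with p_1 ∩ S_1 = ∅. Then for every n ≥ 1 there exists a strictly increasing chain of prime ideals p_1 ⊂ p_2 ⊂ ⋯ ⊂ p_n of A with p_n ∩ S_n = ∅. In particular, A has infinite Krull dimension. -/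

import Mathlib

/-- Arnold-style criterion: given elements `h n` and sets `S n` (indexed for `n ≥ 1`)
with `h n ∈ S n`, satisfying (1) `S (n+1) ⊆ S n`, (2) each `S n` multiplicatively closed,
(3) `g ∈ S (n+1)` and `f : A` imply `g + f * h n ∈ S (n+1)`, together with a prime `p₁`
disjoint from `S 1`, there are arbitrarily long strictly increasing chains of primes
starting at `p₁` whose top is disjoint from the corresponding `S n`; in particular the
Krull dimension of `A` is infinite. -/

theorem step_lemma (A : Type*) [CommRing A] (h : ℕ → A) (S : ℕ → Set A)
    (hmem : ∀ n, 1 ≤ n → h n ∈ S n)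
    (hyp1 : ∀ n, 1 ≤ n → S (n + 1) ⊆ S n)
    (hyp2 : ∀ n, 1 ≤ n → ∀ a ∈ S n, ∀ b ∈ S n, a * b ∈ S n)
    (hyp3 : ∀ n, 1 ≤ n → ∀ g ∈ S (n + 1), ∀ f : A, g + f * h n ∈ S (n + 1))
    (n : ℕ) (hn : 1 ≤ n) (p : Ideal A)
    (hd : (p : Set A) ∩ S n = ∅) :
    ∃ q : Ideal A, q.IsPrime ∧ p < q ∧ ((q : Set A) ∩ S (n + 1) = ∅) := by
  set I : Ideal A := p ⊔ Ideal.span {h n} with hI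
  have key : ∀ x ∈ (I : Set A), x ∉ S (n + 1) := by
    intro x hx hxS
    rw [hI] at hx
    rcases Submodule.mem_sup.mp hx with ⟨a, ha, b, hb, rfl⟩
    rcases Ideal.mem_span_singleton'.mp hb with ⟨f, rfl⟩
    have ha' : a ∈ S (n + 1) := by
      have : a = (a + f * h n) + (-f) * h n := by ring
      rw [this]; exact hyp3 n hn _ hxS (-f)
    have : a ∈ (p : Set A) ∩ S n := ⟨ha, hyp1 n hn ha'⟩
    rw [hd] at this; exact this
  have hclos : ∀ x ∈ Submonoid.closure (S (n + 1)), x ∈ S (n + 1) ∨ x = 1 := by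
    intro x hx
    induction hx using Submonoid.closure_induction with
    | mem y hy => exact Or.inl hy
    | one => exact Or.inr rfl
    | mul a b _ _ ha hb =>
      rcases ha with ha | rfl
      · rcases hb with hb | rfl
        · exact Or.inl (hyp2 (n+1) (by omega) a ha b hb)
        · rw [mul_one]; exact Or.inl ha
      · rw [one_mul]; exact hb
  have hdisjI : Disjoint (I : Set A) (Submonoid.closure (S (n + 1)) : Set A) := by
    rw [Set.disjoint_left]
    intro x hxI hxC
    rcases hclos x hxC with hxS | rfl
    · exact key x hxI hxS
    · have : I = ⊤ := Ideal.eq_top_of_isUnit_mem _ hxI isUnit_one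
      have : h (n + 1) ∈ (I : Set A) := by rw [this]; trivial
      exact key _ this (hmem (n + 1) (by omega))
  obtain ⟨q, hq, hIq, hqd⟩ := Ideal.exists_le_prime_disjoint I _ hdisjI
  refine ⟨q, hq, ?_, ?_⟩
  · refine lt_of_le_of_ne (le_trans le_sup_left hIq) ?_
    intro hpq
    have hhn : h n ∈ q := hIq (Ideal.mem_sup_right (Ideal.mem_span_singleton_self (h n)))
    rw [← hpq] at hhn
    have : h n ∈ (p : Set A) ∩ S n := ⟨hhn, hmem n hn⟩
    rw [hd] at this; exact this
  · rw [Set.eq_empty_iff_forall_notMem]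
    rintro x ⟨hxq, hxS⟩
    exact Set.disjoint_left.mp hqd hxq (Submonoid.subset_closure hxS)

theorem stmt0 (A : Type*) [CommRing A] (h : ℕ → A) (S : ℕ → Set A)
    (hmem : ∀ n, 1 ≤ n → h n ∈ S n)
    (hyp1 : ∀ n, 1 ≤ n → S (n + 1) ⊆ S n)
    (hyp2 : ∀ n, 1 ≤ n → ∀ a ∈ S n, ∀ b ∈ S n, a * b ∈ S n)
    (hyp3 : ∀ n, 1 ≤ n → ∀ g ∈ S (n + 1), ∀ f : A, g + f * h n ∈ S (n + 1))
    (p₁ : Ideal A) (hp₁ : p₁.IsPrime) (hdisj : (p₁ : Set A) ∩ S 1 = ∅) :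
    (∀ n : ℕ, ∀ hn : 1 ≤ n, ∃ P : Fin n → Ideal A,
      (∀ i, (P i).IsPrime) ∧ StrictMono P ∧ P ⟨0, by omega⟩ = p₁ ∧
      ((P ⟨n - 1, by omega⟩ : Set A) ∩ S n = ∅)) ∧
    ringKrullDim A = ⊤ := by
  classical
  have step : ∀ k : ℕ, ∀ q : Ideal A, ((q : Set A) ∩ S (k + 1) = ∅) →
      ∃ r : Ideal A, r.IsPrime ∧ q < r ∧ ((r : Set A) ∩ S (k + 2) = ∅) :=
    fun k q hq => step_lemma A h S hmem hyp1 hyp2 hyp3 (k + 1) (by omega) q hq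
  choose F h1 h2 h3 using step
  let T : ℕ → Type _ := fun k => {q : Ideal A // q.IsPrime ∧ ((q : Set A) ∩ S (k + 1) = ∅)}
  let c : ∀ k, T k := fun k => Nat.rec (motive := T) ⟨p₁, hp₁, hdisj⟩
    (fun k ck => ⟨F k ck.1 ck.2.2, h1 k ck.1 ck.2.2, h3 k ck.1 ck.2.2⟩) k
  have hlt : ∀ k, (c k).1 < (c (k + 1)).1 := fun k => h2 k (c k).1 (c k).2.2
  have hmono : StrictMono (fun k => (c k).1) := strictMono_nat_of_lt_succ hlt
  constructor
  · intro n hn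
    refine ⟨fun i => (c i).1, fun i => (c i).2.1, fun i j hij => hmono hij, rfl, ?_⟩
    have hn' : n - 1 + 1 = n := by omega
    convert (c (n - 1)).2.2 using 2
    rw [hn']
  · show Order.krullDim (PrimeSpectrum A) = ⊤
    have : InfiniteDimensionalOrder (PrimeSpectrum A) :=
      ⟨fun n => ⟨⟨n, fun i => ⟨(c i).1, (c i).2.1⟩, fun i => by
        show (_ : PrimeSpectrum A) < _
        rw [← PrimeSpectrum.asIdeal_lt_asIdeal]
        exact hmono (by simp [Fin.lt_def])⟩, rfl⟩⟩
    exact Order.krullDim_eq_top
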